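/- (Exchangeable Markov inequality, as used in Theorem 3.) Let X₁, ..., Xₙ be exchangeable nonnegative random variables with E[Xᵢ] ≤ μ. Then for any t > 0, P(∃ k ∈ {1,...,n} : (1/k)·Σ_{i=1}^{k} Xᵢ ≥ t) ≤ μ/t. -/

import Mathlib

open MeasureTheory

namespace ExchMarkov

noncomputable def S (n : ℕ) (k : ℕ) (x : Fin n → ℝ) : ℝ :=
  ∑ i : Fin n, if (i : ℕ) < k then x i else 0

def Bset (n : ℕ) (t : ℝ) (k : ℕ) : Set (Fin n → ℝ) :=
  {x | ∃ j : ℕ, k ≤ j ∧ j ≤ n ∧ t ≤ (1 / j : ℝ) * S n j x}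

def Aset (n : ℕ) (t : ℝ) (k : ℕ) : Set (Fin n → ℝ) := Bset n t k \ Bset n t (k + 1)

lemma measurable_S (n k : ℕ) : Measurable (S n k) := by
  apply Finset.measurable_sum
  intro i _
  by_cases h : (i : ℕ) < k <;> simp [h, measurable_pi_apply]

lemma measurableSet_Bset (n : ℕ) (t : ℝ) (k : ℕ) : MeasurableSet (Bset n t k) := by
  have : Bset n t k = ⋃ j : ℕ, {x | k ≤ j ∧ j ≤ n ∧ t ≤ (1 / j : ℝ) * S n j x} := by
    ext x; simp [Bset, Set.mem_iUnion]
  rw [this]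
  refine MeasurableSet.iUnion fun j => ?_
  by_cases h1 : k ≤ j
  · by_cases h2 : j ≤ n
    · have : {x : Fin n → ℝ | k ≤ j ∧ j ≤ n ∧ t ≤ (1 / j : ℝ) * S n j x}
          = {x | t ≤ (1 / j : ℝ) * S n j x} := by ext x; simp [h1, h2]
      rw [this]
      exact measurableSet_le measurable_const (measurable_const.mul (measurable_S n j))
    · simp [h2]
  · simp [h1]

lemma measurableSet_Aset (n : ℕ) (t : ℝ) (k : ℕ) : MeasurableSet (Aset n t k) :=
  (measurableSet_Bset n t k).diff (measurableSet_Bset n t (k + 1))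

lemma Bset_anti (n : ℕ) (t : ℝ) {k l : ℕ} (h : k ≤ l) : Bset n t l ⊆ Bset n t k := by
  rintro x ⟨j, hj1, hj2, hj3⟩; exact ⟨j, h.trans hj1, hj2, hj3⟩

lemma Bset_succ_n (n : ℕ) (t : ℝ) : Bset n t (n + 1) = ∅ := by
  ext x; simp only [Bset, Set.mem_setOf_eq, Set.mem_empty_iff_false, iff_false]
  rintro ⟨j, hj1, hj2, -⟩; omega

/-- On `Aset n t k`, the prefix average at `k` itself reaches `t`. -/
lemma cond_of_mem_Aset {n : ℕ} {t : ℝ} {k : ℕ} (_hk : k ≤ n) {x : Fin n → ℝ}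
    (hx : x ∈ Aset n t k) : t ≤ (1 / k : ℝ) * S n k x := by
  obtain ⟨⟨j, hj1, hj2, hj3⟩, hnot⟩ := hx
  rcases eq_or_lt_of_le hj1 with rfl | hlt
  · exact hj3
  · exact absurd ⟨j, hlt, hj2, hj3⟩ hnot

lemma S_comp_perm {n k j : ℕ} (σ : Equiv.Perm (Fin n))
    (hσ : ∀ i : Fin n, k ≤ (i : ℕ) → σ i = i) (hkj : k ≤ j) (x : Fin n → ℝ) :
    S n j (fun i => x (σ i)) = S n j x := by
  have hlt : ∀ i : Fin n, (i : ℕ) < k → (σ i : ℕ) < k := by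
    intro i hi
    by_contra h
    have h2 := hσ (σ i) (le_of_not_gt h)
    have h3 := σ.injective h2
    rw [h3] at h
    omega
  have hiff : ∀ i : Fin n, ((σ i : ℕ) < j ↔ (i : ℕ) < j) := by
    intro i
    by_cases hi : (i : ℕ) < k
    · have := hlt i hi; constructor <;> intro <;> omega
    · rw [hσ i (le_of_not_gt hi)]
  calc (∑ i : Fin n, if (i : ℕ) < j then x (σ i) else 0)
      = ∑ i : Fin n, (if ((σ i : ℕ)) < j then x (σ i) else 0) := by
        refine Finset.sum_congr rfl fun i _ => ?_
        simp [hiff i]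
    _ = ∑ i : Fin n, if (i : ℕ) < j then x i else 0 :=
        Equiv.sum_comp σ (fun i : Fin n => if (i : ℕ) < j then x i else 0)


lemma Bset_comp_perm {n k l : ℕ} {t : ℝ} (σ : Equiv.Perm (Fin n))
    (hσ : ∀ i : Fin n, k ≤ (i : ℕ) → σ i = i) (hkl : k ≤ l) (x : Fin n → ℝ) :
    (fun i => x (σ i)) ∈ Bset n t l ↔ x ∈ Bset n t l := by
  unfold Bset
  simp only [Set.mem_setOf_eq]
  constructor
  · rintro ⟨j, hj1, hj2, hj3⟩
    exact ⟨j, hj1, hj2, by rwa [S_comp_perm σ hσ (hkl.trans hj1)] at hj3⟩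
  · rintro ⟨j, hj1, hj2, hj3⟩
    exact ⟨j, hj1, hj2, by rwa [S_comp_perm σ hσ (hkl.trans hj1)]⟩

lemma Aset_comp_perm {n k : ℕ} {t : ℝ} (σ : Equiv.Perm (Fin n))
    (hσ : ∀ i : Fin n, k ≤ (i : ℕ) → σ i = i) (x : Fin n → ℝ) :
    (fun i => x (σ i)) ∈ Aset n t k ↔ x ∈ Aset n t k := by
  unfold Aset
  simp only [Set.mem_diff]
  rw [Bset_comp_perm σ hσ le_rfl, Bset_comp_perm σ hσ (Nat.le_succ k)]

open Classical in
lemma exists_last (P : ℕ → Prop) (n : ℕ) (h1 : P 1)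
    (hmono : ∀ k, P (k + 1) → P k) (hn : ¬ P (n + 1)) :
    ∃ k, 1 ≤ k ∧ k ≤ n ∧ P k ∧ ¬ P (k + 1) := by
  have hex : ∃ m, ¬ P m := ⟨n + 1, hn⟩
  have hMn : Nat.find hex ≤ n + 1 := Nat.find_le hn
  have hnotM : ¬ P (Nat.find hex) := Nat.find_spec hex
  have h0 : P 0 := hmono 0 h1
  have hM2 : 2 ≤ Nat.find hex := by
    rcases Nat.lt_or_ge (Nat.find hex) 2 with h | h
    · interval_cases h' : Nat.find hex
      · exact absurd h0 (h' ▸ hnotM)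
      · exact absurd h1 (h' ▸ hnotM)
    · exact h
  refine ⟨Nat.find hex - 1, by omega, by omega, ?_, ?_⟩
  · have := Nat.find_min hex (m := Nat.find hex - 1) (by omega)
    exact not_not.mp this
  · have : Nat.find hex - 1 + 1 = Nat.find hex := by omega
    rw [this]; exact hnotM

lemma Bset_one_eq_biUnion (n : ℕ) (t : ℝ) :
    Bset n t 1 = ⋃ k ∈ Finset.Icc 1 n, Aset n t k := by
  ext x
  simp only [Set.mem_iUnion, Finset.mem_Icc, exists_prop]
  constructor
  · intro hx
    obtain ⟨k, hk1, hkn, hPk, hPk1⟩ := exists_last (fun k => x ∈ Bset n t k) n hx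
      (fun k hk => Bset_anti n t (Nat.le_succ k) hk)
      (by show x ∉ Bset n t (n + 1); rw [Bset_succ_n]; exact Set.notMem_empty x)
    exact ⟨k, ⟨hk1, hkn⟩, hPk, hPk1⟩
  · rintro ⟨k, ⟨hk1, hkn⟩, hx, -⟩
    exact Bset_anti n t hk1 hx

lemma Aset_disjoint (n : ℕ) (t : ℝ) {k l : ℕ} (h : k < l) :
    Disjoint (Aset n t k) (Aset n t l) := by
  rw [Set.disjoint_left]
  rintro x ⟨-, hk2⟩ ⟨hl1, -⟩
  exact hk2 (Bset_anti n t (by omega) hl1)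

lemma card_filter_lt (n k : ℕ) (h : k ≤ n) :
    (Finset.univ.filter (fun i : Fin n => (i : ℕ) < k)).card = k := by
  rw [Finset.card_filter]
  rw [Fin.sum_univ_eq_sum_range (fun i => if i < k then (1 : ℕ) else 0), ← Finset.card_filter]
  have : Finset.filter (fun i => i < k) (Finset.range n) = Finset.range k := by
    ext j; simp; omega
  rw [this, Finset.card_range]

end ExchMarkov

open ExchMarkov in
/-- Exchangeable Markov inequality: for exchangeable nonnegative random variables with
mean ≤ m, the probability that some prefix average reaches t is at most m/t. -/
theorem exchangeable_markov_inequality {Ω : Type*} [MeasurableSpace Ω] (μ : Measure Ω)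
    [IsProbabilityMeasure μ] (n : ℕ) (X : Fin n → Ω → ℝ)
    (hmeas : ∀ i, Measurable (X i)) (hint : ∀ i, Integrable (X i) μ)
    (hnonneg : ∀ i ω, 0 ≤ X i ω)
    (hexch : ∀ σ : Equiv.Perm (Fin n),
      μ.map (fun ω => fun i => X (σ i) ω) = μ.map (fun ω => fun i => X i ω))
    (m : ℝ) (hm : ∀ i, ∫ ω, X i ω ∂μ ≤ m)
    (t : ℝ) (ht : 0 < t) :
    μ {ω | ∃ k : ℕ, 1 ≤ k ∧ k ≤ n ∧
        t ≤ (1 / k : ℝ) * ∑ i : Fin n, (if (i : ℕ) < k then X i ω else 0)} ≤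
      ENNReal.ofReal (m / t) := by
  classical
  rcases Nat.eq_zero_or_pos n with rfl | hn
  · have hempty : {ω : Ω | ∃ k : ℕ, 1 ≤ k ∧ k ≤ 0 ∧
        t ≤ (1 / k : ℝ) * ∑ i : Fin 0, (if (i : ℕ) < k then X i ω else 0)} = ∅ := by
      ext ω; simp only [Set.mem_setOf_eq, Set.mem_empty_iff_false, iff_false]
      rintro ⟨k, h1, h2, -⟩; omega
    rw [hempty, measure_empty]; exact zero_le
  set Xv : Ω → (Fin n → ℝ) := fun ω i => X i ω with hXv
  have hXvm : Measurable Xv := measurable_pi_lambda _ hmeas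
  set i0 : Fin n := ⟨0, hn⟩ with hi0def
  -- the event is the preimage of Bset n t 1
  have hE : {ω : Ω | ∃ k : ℕ, 1 ≤ k ∧ k ≤ n ∧
      t ≤ (1 / k : ℝ) * ∑ i : Fin n, (if (i : ℕ) < k then X i ω else 0)}
      = Xv ⁻¹' Bset n t 1 := by
    ext ω; simp [Bset, S, Xv]
  -- the exchange step
  have hexchInt : ∀ k : ℕ, 1 ≤ k → k ≤ n → ∀ i : Fin n, (i : ℕ) < k →
      ∫ ω in Xv ⁻¹' Aset n t k, X i ω ∂μ = ∫ ω in Xv ⁻¹' Aset n t k, X i0 ω ∂μ := by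
    intro k hk1 hkn i hik
    set σ := Equiv.swap i0 i with hσdef
    have hσfix : ∀ j : Fin n, k ≤ (j : ℕ) → σ j = j := by
      intro j hj
      have h1 : (j : ℕ) ≠ (i0 : ℕ) := by
        have : (i0 : ℕ) = 0 := rfl
        omega
      have h2 : (j : ℕ) ≠ (i : ℕ) := by omega
      exact Equiv.swap_apply_of_ne_of_ne (Fin.ne_of_val_ne h1) (Fin.ne_of_val_ne h2)
    have hσi0 : σ i0 = i := Equiv.swap_apply_left i0 i
    have hg : Measurable (Set.indicator (Aset n t k) (fun x : Fin n → ℝ => x i0)) :=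
      (measurable_pi_apply i0).indicator (measurableSet_Aset n t k)
    have hσm : Measurable (fun ω => fun j => X (σ j) ω) :=
      measurable_pi_lambda _ (fun j => hmeas (σ j))
    have e1 : ∀ ω, Set.indicator (Xv ⁻¹' Aset n t k) (X i) ω
        = Set.indicator (Aset n t k) (fun x => x i0) (fun j => X (σ j) ω) := by
      intro ω
      have hmem : ((fun j => X (σ j) ω) ∈ Aset n t k) ↔ Xv ω ∈ Aset n t k :=
        Aset_comp_perm (t := t) σ hσfix (Xv ω)
      simp only [Set.indicator_apply, Set.mem_preimage, hσi0]
      by_cases hω : Xv ω ∈ Aset n t k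
      · rw [if_pos hω, if_pos (hmem.mpr hω)]
      · rw [if_neg hω, if_neg (fun h => hω (hmem.mp h))]
    have e2 : ∀ ω, Set.indicator (Aset n t k) (fun x => x i0) (Xv ω)
        = Set.indicator (Xv ⁻¹' Aset n t k) (X i0) ω := by
      intro ω
      simp only [Set.indicator_apply, Set.mem_preimage]
      rfl
    calc ∫ ω in Xv ⁻¹' Aset n t k, X i ω ∂μ
        = ∫ ω, Set.indicator (Xv ⁻¹' Aset n t k) (X i) ω ∂μ :=
          (integral_indicator (hXvm (measurableSet_Aset n t k))).symm
      _ = ∫ ω, Set.indicator (Aset n t k) (fun x => x i0) (fun j => X (σ j) ω) ∂μ :=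
          integral_congr_ae (Filter.Eventually.of_forall e1)
      _ = ∫ x, Set.indicator (Aset n t k) (fun x => x i0) x
            ∂(μ.map (fun ω => fun j => X (σ j) ω)) :=
          (integral_map hσm.aemeasurable hg.aestronglyMeasurable).symm
      _ = ∫ x, Set.indicator (Aset n t k) (fun x => x i0) x ∂(μ.map Xv) := by
          rw [hexch σ]
      _ = ∫ ω, Set.indicator (Aset n t k) (fun x => x i0) (Xv ω) ∂μ :=
          integral_map hXvm.aemeasurable hg.aestronglyMeasurable
      _ = ∫ ω, Set.indicator (Xv ⁻¹' Aset n t k) (X i0) ω ∂μ :=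
          integral_congr_ae (Filter.Eventually.of_forall e2)
      _ = ∫ ω in Xv ⁻¹' Aset n t k, X i0 ω ∂μ :=
          integral_indicator (hXvm (measurableSet_Aset n t k))
  -- per-k inequality: t * μ(A_k) ≤ ∫_{A_k} X i0
  have hkey : ∀ k ∈ Finset.Icc 1 n,
      t * (μ (Xv ⁻¹' Aset n t k)).toReal ≤ ∫ ω in Xv ⁻¹' Aset n t k, X i0 ω ∂μ := by
    intro k hk
    rw [Finset.mem_Icc] at hk
    obtain ⟨hk1, hkn⟩ := hk
    have hAm : MeasurableSet (Xv ⁻¹' Aset n t k) := hXvm (measurableSet_Aset n t k)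
    have hkpos : (0 : ℝ) < (k : ℝ) := by exact_mod_cast hk1
    have hterm : ∀ i : Fin n, Integrable (fun ω => if (i : ℕ) < k then X i ω else 0) μ := by
      intro i; by_cases h : (i : ℕ) < k <;> simp [h, hint i]
    have hS : Integrable (fun ω => S n k (Xv ω)) μ := by
      have he : (fun ω => S n k (Xv ω))
          = fun ω => ∑ i : Fin n, if (i : ℕ) < k then X i ω else 0 := rfl
      rw [he]
      exact integrable_finset_sum _ (fun i _ => hterm i)
    have h1 : (μ (Xv ⁻¹' Aset n t k)).toReal * (t * k)
        ≤ ∫ ω in Xv ⁻¹' Aset n t k, S n k (Xv ω) ∂μ := by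
      have hmono := setIntegral_mono_on
        (f := fun _ : Ω => t * (k : ℝ)) (g := fun ω => S n k (Xv ω))
        (integrableOn_const (measure_ne_top μ _)) hS.integrableOn hAm ?_
      · rwa [setIntegral_const, smul_eq_mul] at hmono
      · intro ω hω
        have hcond := cond_of_mem_Aset hkn (Set.mem_preimage.mp hω)
        rw [one_div, inv_mul_eq_div] at hcond
        exact (le_div_iff₀ hkpos).mp hcond
    have h2 : ∫ ω in Xv ⁻¹' Aset n t k, S n k (Xv ω) ∂μ
        = (k : ℝ) * ∫ ω in Xv ⁻¹' Aset n t k, X i0 ω ∂μ := by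
      have he : ∫ ω in Xv ⁻¹' Aset n t k, S n k (Xv ω) ∂μ
          = ∑ i : Fin n, ∫ ω in Xv ⁻¹' Aset n t k, (if (i : ℕ) < k then X i ω else 0) ∂μ := by
        exact integral_finset_sum _ (fun i _ => (hterm i).integrableOn)
      rw [he]
      have he2 : ∀ i : Fin n, ∫ ω in Xv ⁻¹' Aset n t k, (if (i : ℕ) < k then X i ω else 0) ∂μ
          = if (i : ℕ) < k then (∫ ω in Xv ⁻¹' Aset n t k, X i0 ω ∂μ) else 0 := by
        intro i
        by_cases h : (i : ℕ) < k
        · simp only [h, if_true]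
          exact hexchInt k hk1 hkn i h
        · simp [h]
      rw [Finset.sum_congr rfl (fun i _ => he2 i), ← Finset.sum_filter,
        Finset.sum_const, card_filter_lt n k hkn, nsmul_eq_mul]
    have h3 : (k : ℝ) * (t * (μ (Xv ⁻¹' Aset n t k)).toReal)
        ≤ (k : ℝ) * ∫ ω in Xv ⁻¹' Aset n t k, X i0 ω ∂μ := by
      calc (k : ℝ) * (t * (μ (Xv ⁻¹' Aset n t k)).toReal)
          = (μ (Xv ⁻¹' Aset n t k)).toReal * (t * k) := by ring
        _ ≤ ∫ ω in Xv ⁻¹' Aset n t k, S n k (Xv ω) ∂μ := h1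
        _ = (k : ℝ) * ∫ ω in Xv ⁻¹' Aset n t k, X i0 ω ∂μ := h2
    exact le_of_mul_le_mul_left h3 hkpos
  -- assemble
  have hAm : ∀ k : ℕ, MeasurableSet (Xv ⁻¹' Aset n t k) :=
    fun k => hXvm (measurableSet_Aset n t k)
  have hdisj : (↑(Finset.Icc 1 n) : Set ℕ).Pairwise
      (Function.onFun Disjoint fun k => Xv ⁻¹' Aset n t k) := by
    intro k _ l _ hkl
    rcases hkl.lt_or_gt with h | h
    · exact (Aset_disjoint n t h).preimage Xv
    · exact ((Aset_disjoint n t h).preimage Xv).symm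
  have hEUnion : Xv ⁻¹' Bset n t 1 = ⋃ k ∈ Finset.Icc 1 n, Xv ⁻¹' Aset n t k := by
    rw [Bset_one_eq_biUnion]
    simp [Set.preimage_iUnion]
  rw [hE, hEUnion]
  have hne : μ (⋃ k ∈ Finset.Icc 1 n, Xv ⁻¹' Aset n t k) ≠ ⊤ := measure_ne_top μ _
  rw [← ENNReal.ofReal_toReal hne]
  apply ENNReal.ofReal_le_ofReal
  rw [le_div_iff₀ ht]
  have hmeasEq : (μ (⋃ k ∈ Finset.Icc 1 n, Xv ⁻¹' Aset n t k)).toReal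
      = ∑ k ∈ Finset.Icc 1 n, (μ (Xv ⁻¹' Aset n t k)).toReal := by
    rw [measure_biUnion_finset hdisj (fun k _ => hAm k),
      ENNReal.toReal_sum (fun k _ => measure_ne_top μ _)]
  rw [hmeasEq]
  calc (∑ k ∈ Finset.Icc 1 n, (μ (Xv ⁻¹' Aset n t k)).toReal) * t
      = ∑ k ∈ Finset.Icc 1 n, t * (μ (Xv ⁻¹' Aset n t k)).toReal := by
        rw [Finset.sum_mul]
        exact Finset.sum_congr rfl (fun k _ => mul_comm _ _)
    _ ≤ ∑ k ∈ Finset.Icc 1 n, ∫ ω in Xv ⁻¹' Aset n t k, X i0 ω ∂μ :=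
        Finset.sum_le_sum hkey
    _ = ∫ ω in ⋃ k ∈ Finset.Icc 1 n, Xv ⁻¹' Aset n t k, X i0 ω ∂μ :=
        (integral_biUnion_finset _ (fun k _ => hAm k) hdisj
          (fun k _ => (hint i0).integrableOn)).symm
    _ ≤ ∫ ω, X i0 ω ∂μ :=
        setIntegral_le_integral (hint i0) (Filter.Eventually.of_forall (hnonneg i0))
    _ ≤ m := hm i0
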